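/- Suppose a sequence of nonzero integers (W_n)_{n≥1} satisfies W_{2^{r+k}} ≡ W_{2^k} (mod 4) for all k ≥ K (some r ≥ 1, K ≥ 0) and |W_{2^k}| ≡ |W_{2^{k−1}}| (mod 4) for all k ≥ 2, with every W_{2^k} odd. Then for each 0 ≤ j < r, the sign of W_{2^{ri+j}} is eventually constant as i → ∞. -/

import Mathlib

lemma sign_eq_of_modeq (m n : ℤ) (hm : Odd m) (hn : Odd n)
    (h : m ≡ n [ZMOD 4]) (h' : |m| ≡ |n| [ZMOD 4]) : m.sign = n.sign := by
  obtain ⟨a, ha⟩ := hm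
  obtain ⟨b, hb⟩ := hn
  have d1 := h.dvd
  have d2 := h'.dvd
  rcases lt_trichotomy m 0 with hm' | hm' | hm' <;>
    rcases lt_trichotomy n 0 with hn' | hn' | hn' <;>
    simp only [abs_of_neg, abs_of_pos, Int.sign_eq_one_of_pos, Int.sign_eq_neg_one_of_neg, hm', hn'] at d1 d2 ⊢ <;>
    omega

theorem sign_eventually_constant (W : ℕ → ℤ) (hnz : ∀ n : ℕ, 1 ≤ n → W n ≠ 0)
    (hodd : ∀ k : ℕ, Odd (W (2 ^ k)))
    (r K : ℕ) (hr : 1 ≤ r)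
    (h1 : ∀ k : ℕ, K ≤ k → W (2 ^ (r + k)) ≡ W (2 ^ k) [ZMOD 4])
    (h2 : ∀ k : ℕ, 2 ≤ k → |W (2 ^ k)| ≡ |W (2 ^ (k - 1))| [ZMOD 4]) :
    ∀ j : ℕ, j < r → ∃ (I : ℕ) (s : ℤ), ∀ i : ℕ, I ≤ i →
      Int.sign (W (2 ^ (r * i + j))) = s := by
  -- |W (2^k)| is constant mod 4 for k ≥ 1
  have habs : ∀ k : ℕ, 1 ≤ k → |W (2 ^ k)| ≡ |W (2 ^ 1)| [ZMOD 4] := by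
    intro k hk
    induction k with
    | zero => omega
    | succ k ih =>
      rcases Nat.lt_or_ge k 1 with hk1 | hk1
      · interval_cases k
        · rfl
      · have := h2 (k + 1) (by omega)
        simpa using this.trans (ih hk1)
  have key : ∀ k : ℕ, K ≤ k → 1 ≤ k →
      Int.sign (W (2 ^ (r + k))) = Int.sign (W (2 ^ k)) := by
    intro k hK hk1
    apply sign_eq_of_modeq _ _ (hodd _) (hodd _) (h1 k hK)
    exact (habs (r + k) (by omega)).trans (habs k hk1).symm
  intro j hj
  refine ⟨K + 1, Int.sign (W (2 ^ (r * (K + 1) + j))), ?_⟩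
  intro i hi
  induction i, hi using Nat.le_induction with
  | base => rfl
  | succ i hi ih =>
    have hge : K + 1 ≤ r * i + j := le_trans hi (by nlinarith)
    have : r * (i + 1) + j = r + (r * i + j) := by ring
    rw [this, key (r * i + j) (by omega) (by omega), ih]
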